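/- Let H be a real Hilbert space, let g_1, …, g_d ∈ H be linearly independent, and let S ⊆ H be a subset whose linear span is dense in H. Then there exist f_1, …, f_d ∈ S such that the d×d matrix with entries ⟨f_i, g_j⟩ is invertible. -/

import Mathlib

/-- In a real Hilbert space, given linearly independent `g_1, …, g_d` and a subset
`S` with dense linear span, one can choose `f_1, …, f_d ∈ S` so that the Gram-type matrix
`⟨f_i, g_j⟩` is invertible. -/
theorem exists_invertible_pairing_matrix {H : Type*} [NormedAddCommGroup H]
    [InnerProductSpace ℝ H] {d : ℕ} (g : Fin d → H) (hg : LinearIndependent ℝ g)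
    (S : Set H) (hS : Dense ((Submodule.span ℝ S : Submodule ℝ H) : Set H)) :
    ∃ f : Fin d → H, (∀ i, f i ∈ S) ∧
      IsUnit (Matrix.of fun i j => (inner ℝ (f i) (g j) : ℝ) : Matrix (Fin d) (Fin d) ℝ) := by
  classical
  set V := EuclideanSpace ℝ (Fin d)
  set T : H →L[ℝ] V :=
    (EuclideanSpace.equiv (Fin d) ℝ).symm.toContinuousLinearMap.comp
      (ContinuousLinearMap.pi fun j => innerSL ℝ (g j)) with hT
  have hTapp : ∀ x j, T x j = inner ℝ (g j) x := by intro x j; rfl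
  -- surjectivity of T
  have hrange : LinearMap.range (T : H →ₗ[ℝ] V) = ⊤ := by
    rw [← Submodule.orthogonal_eq_bot_iff]
    rw [Submodule.eq_bot_iff]
    intro c hc
    have h0 : ∀ x : H, (inner ℝ (T x) c : ℝ) = 0 := fun x =>
      (Submodule.mem_orthogonal _ c).1 hc (T x) ⟨x, rfl⟩
    have key : ∀ x : H, (inner ℝ (∑ j, c j • g j) x : ℝ) = 0 := by
      intro x
      have := h0 x
      rw [PiLp.inner_apply] at this
      simpa [inner_smul_left, hTapp, mul_comm, sum_inner] using this
    have hz : (∑ j, c j • g j) = 0 := by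
      have := key (∑ j, c j • g j)
      exact inner_self_eq_zero.mp this
    have := (Fintype.linearIndependent_iff.mp hg) c hz
    ext j; simpa using this j
  have hspan : Submodule.span ℝ (T '' S) = ⊤ := by
    have hclosed : IsClosed ((Submodule.span ℝ (T '' S) : Submodule ℝ V) : Set V) :=
      (Submodule.span ℝ (T '' S)).closed_of_finiteDimensional
    rw [Submodule.eq_top_iff']
    intro v
    obtain ⟨x, hx⟩ := LinearMap.range_eq_top.mp hrange v
    have hmem : v ∈ closure ((Submodule.span ℝ (T '' S) : Submodule ℝ V) : Set V) := by
      have hxc : x ∈ closure ((Submodule.span ℝ S : Submodule ℝ H) : Set H) := by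
        rw [hS.closure_eq]; trivial
      have := (T.continuous.continuousAt (x := x)).mono_left (le_refl _)
      have himg : T x ∈ closure (T '' ((Submodule.span ℝ S : Submodule ℝ H) : Set H)) :=
        map_mem_closure T.continuous hxc (fun y hy => Set.mem_image_of_mem _ hy)
      refine hx ▸ closure_mono ?_ himg
      rintro _ ⟨y, hy, rfl⟩
      rw [SetLike.mem_coe]
      have hm := Submodule.mem_map_of_mem (f := (T : H →ₗ[ℝ] V)) hy
      rw [Submodule.map_span] at hm
      exact hm
    rwa [hclosed.closure_eq] at hmem
  obtain ⟨b, hbS, hbspan, hbind⟩ := exists_linearIndependent ℝ (T '' S)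
  rw [hspan] at hbspan
  haveI : FiniteDimensional ℝ V := by infer_instance
  have hbfin : b.Finite := hbind.setFinite
  haveI : Fintype b := hbfin.fintype
  let B : Module.Basis b ℝ V := Module.Basis.mk hbind (by rw [Subtype.range_coe, hbspan])
  have hcard : Fintype.card b = d := by
    have := Module.finrank_eq_card_basis B
    rw [finrank_euclideanSpace_fin] at this
    omega
  let e : Fin d ≃ b := (Fintype.equivFinOfCardEq hcard).symm
  have hvi : LinearIndependent ℝ (fun i : Fin d => ((e i : b) : V)) :=
    hbind.comp e e.injective
  have hchoice : ∀ i : Fin d, ∃ s : H, s ∈ S ∧ T s = (e i : V) := by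
    intro i
    obtain ⟨s, hs, hTs⟩ := hbS (e i).2
    exact ⟨s, hs, hTs⟩
  choose f hfS hfT using hchoice
  refine ⟨f, hfS, ?_⟩
  rw [← Matrix.linearIndependent_rows_iff_isUnit]
  have hrows : (fun i => (Matrix.of fun i j => (inner ℝ (f i) (g j) : ℝ)) i) =
      fun i : Fin d => (((e i : b) : V)).ofLp := by
    funext i
    rw [← hfT i]
    funext j
    rw [Matrix.of_apply, hTapp, real_inner_comm]
  show LinearIndependent ℝ (fun i => (Matrix.of fun i j => (inner ℝ (f i) (g j) : ℝ)) i)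
  rw [hrows]
  exact hvi.map' (EuclideanSpace.equiv (Fin d) ℝ).toLinearEquiv.toLinearMap (LinearEquiv.ker _)
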